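/- Let A ∈ 𝓕 with P(A) > 0, let x⁺ > 0, and suppose λ > 0 satisfies E[ξ I(λξ) 1_A] = x⁺. Then Z* := I(λξ) 1_A belongs to H₁(A, x⁺), it maximizes Z ↦ E[u(Z⁺)] over H₁(A, x⁺), and any other maximizer in H₁(A, x⁺) coincides with Z* almost surely. -/

import Mathlib

open MeasureTheory Set Filter
open scoped Classical ENNReal

noncomputable section

variable {Ω : Type*} [MeasurableSpace Ω]

/-- The set `H₁(A, x⁺)` of admissible gain parts. -/
def H1 (P : Measure Ω) (ξ : Ω → ℝ) (A : Set Ω) (x : ℝ) : Set (Ω → ℝ) :=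
  {Z | Integrable (fun ω => ξ ω * Z ω) P ∧ (∫ ω, ξ ω * Z ω ∂P) ≤ x ∧
    (∀ᵐ ω ∂P, ω ∉ A → Z ω = 0) ∧ (∀ᵐ ω ∂P, ω ∈ A → 0 ≤ Z ω)}

/-- `E[u(Z⁺)]`. -/
def Uof (P : Measure Ω) (u : ℝ → ℝ) (Z : Ω → ℝ) : ℝ := ∫ ω, u (max (Z ω) 0) ∂P

/-- The convex conjugate `v(y) = sup_{x ≥ 0} (u(x) - x y)`. -/
def vconj (u : ℝ → ℝ) (y : ℝ) : ℝ := sSup {z | ∃ x ≥ (0:ℝ), z = u x - x * y}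

lemma key_ineq (u u' u'' : ℝ → ℝ)
    (hu_d1 : ∀ x ∈ Ici (0:ℝ), HasDerivWithinAt u (u' x) (Ici 0) x)
    (hu_d2 : ∀ x ∈ Ici (0:ℝ), HasDerivWithinAt u' (u'' x) (Ici 0) x)
    (hu_conc : StrictConcaveOn ℝ (Ici 0) u)
    (hu'lim : Tendsto u' atTop (nhds 0))
    (I : ℝ → ℝ)
    (hI1 : ∀ y : ℝ, 0 < y → (∃ x > (0:ℝ), u' x = y) → 0 < I y ∧ u' (I y) = y)
    (hI2 : ∀ y : ℝ, 0 < y → (∀ x > (0:ℝ), u' x < y) → I y = 0)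
    (y : ℝ) (hy : 0 < y) :
    0 ≤ I y ∧ ∀ x, 0 ≤ x →
      (u x ≤ u (I y) + y * (x - I y)) ∧ (x ≠ I y → u x < u (I y) + y * (x - I y)) := by
  have grad : ∀ x₀ ∈ Ici (0:ℝ), ∀ x ∈ Ici (0:ℝ), x ≠ x₀ →
      u x < u x₀ + u' x₀ * (x - x₀) := by
    intro x₀ hx₀ x hx hne
    rcases hne.lt_or_gt with hlt | hgt
    · have hs := hu_conc.lt_slope_of_hasDerivWithinAt hx hx₀ hlt (hu_d1 x₀ hx₀)
      rw [slope_def_field] at hs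
      rw [lt_div_iff₀ (by linarith : (0:ℝ) < x₀ - x)] at hs
      nlinarith
    · have hs := hu_conc.slope_lt_of_hasDerivWithinAt hx₀ hx hgt (hu_d1 x₀ hx₀)
      rw [slope_def_field] at hs
      rw [div_lt_iff₀ (by linarith : (0:ℝ) < x - x₀)] at hs
      nlinarith
  have hu'cont : ContinuousOn u' (Ici 0) := fun x hx => (hu_d2 x hx).continuousWithinAt
  by_cases h : ∃ x > (0:ℝ), u' x = y
  · obtain ⟨hIpos, hIu'⟩ := hI1 y hy h
    refine ⟨hIpos.le, fun x hx => ?_⟩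
    constructor
    · rcases eq_or_ne x (I y) with rfl | hne
      · simp
      · have := grad (I y) hIpos.le x hx hne
        rw [hIu'] at this; linarith
    · intro hne
      have := grad (I y) hIpos.le x hx hne
      rw [hIu'] at this; linarith
  · have hall : ∀ x > (0:ℝ), u' x < y := by
      intro x hx
      rcases lt_trichotomy (u' x) y with hlt | heq | hgt
      · exact hlt
      · exact absurd ⟨x, hx, heq⟩ h
      · exfalso
        have hev : ∀ᶠ t in atTop, u' t < y := hu'lim.eventually_lt_const hy
        obtain ⟨b, hb⟩ := eventually_atTop.mp hev
        set c := max b (x + 1) with hc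
        have hxc : x < c := lt_of_lt_of_le (lt_add_one x) (le_max_right _ _)
        have hu'c : u' c < y := hb c (le_max_left _ _)
        have hcont : ContinuousOn u' (Icc x c) :=
          hu'cont.mono (fun t ht => le_trans hx.le ht.1)
        have hmem : y ∈ Icc (u' c) (u' x) := ⟨hu'c.le, hgt.le⟩
        obtain ⟨t, htmem, htv⟩ := intermediate_value_Icc' hxc.le hcont hmem
        exact h ⟨t, lt_of_lt_of_le hx htmem.1, htv⟩
    have hI0 : I y = 0 := hI2 y hy hall
    have hu'0 : u' 0 ≤ y := by
      have hcw : ContinuousWithinAt u' (Ici 0) 0 :=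
        (hu_d2 0 self_mem_Ici).continuousWithinAt
      have ht : Tendsto u' (nhdsWithin 0 (Ioi 0)) (nhds (u' 0)) :=
        hcw.mono_left (nhdsWithin_mono 0 Ioi_subset_Ici_self)
      exact le_of_tendsto ht (eventually_mem_nhdsWithin.mono fun t ht' => (hall t ht').le)
    rw [hI0]
    refine ⟨le_rfl, fun x hx => ?_⟩
    rcases eq_or_lt_of_le hx with rfl | hxpos
    · simp
    · have hg := grad 0 self_mem_Ici x hx hxpos.ne'
      constructor
      · nlinarith
      · intro _; nlinarith

lemma vconj_eq (u u' u'' : ℝ → ℝ)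
    (hu_d1 : ∀ x ∈ Ici (0:ℝ), HasDerivWithinAt u (u' x) (Ici 0) x)
    (hu_d2 : ∀ x ∈ Ici (0:ℝ), HasDerivWithinAt u' (u'' x) (Ici 0) x)
    (hu_conc : StrictConcaveOn ℝ (Ici 0) u)
    (hu'lim : Tendsto u' atTop (nhds 0))
    (I : ℝ → ℝ)
    (hI1 : ∀ y : ℝ, 0 < y → (∃ x > (0:ℝ), u' x = y) → 0 < I y ∧ u' (I y) = y)
    (hI2 : ∀ y : ℝ, 0 < y → (∀ x > (0:ℝ), u' x < y) → I y = 0)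
    (y : ℝ) (hy : 0 < y) :
    vconj u y = u (I y) - I y * y := by
  obtain ⟨hI0, hkey⟩ := key_ineq u u' u'' hu_d1 hu_d2 hu_conc hu'lim I hI1 hI2 y hy
  apply IsGreatest.csSup_eq
  constructor
  · exact ⟨I y, hI0, rfl⟩
  · rintro z ⟨x, hx, rfl⟩
    have := (hkey x hx).1
    nlinarith

theorem stmt0
    (P : Measure Ω) [IsProbabilityMeasure P]
    (ξ : Ω → ℝ) (hξm : Measurable ξ)
    (hξpos : ∀ᵐ ω ∂P, 0 < ξ ω)
    (hξint : Integrable ξ P) (hξ1 : (∫ ω, ξ ω ∂P) = 1)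
    (u u' u'' : ℝ → ℝ)
    (hu_d1 : ∀ x ∈ Ici (0:ℝ), HasDerivWithinAt u (u' x) (Ici 0) x)
    (hu_d2 : ∀ x ∈ Ici (0:ℝ), HasDerivWithinAt u' (u'' x) (Ici 0) x)
    (hu_conc : StrictConcaveOn ℝ (Ici 0) u)
    (hu_mono : StrictMonoOn u (Ici 0))
    (hu0 : u 0 = 0)
    (hu'lim : Tendsto u' atTop (nhds 0))
    (hv_int : ∀ l : ℝ, 0 < l → Integrable (fun ω => vconj u (l * ξ ω)) P)
    (I : ℝ → ℝ)
    (hI1 : ∀ y : ℝ, 0 < y → (∃ x > (0:ℝ), u' x = y) → 0 < I y ∧ u' (I y) = y)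
    (hI2 : ∀ y : ℝ, 0 < y → (∀ x > (0:ℝ), u' x < y) → I y = 0)
    (A : Set Ω) (hA : MeasurableSet A) (hPA : 0 < P A)
    (xp : ℝ) (hxp : 0 < xp)
    (lam : ℝ) (hlam : 0 < lam)
    (hbud : (∫ ω, ξ ω * A.indicator (fun ω' => I (lam * ξ ω')) ω ∂P) = xp) :
    A.indicator (fun ω => I (lam * ξ ω)) ∈ H1 P ξ A xp ∧
    (∀ Z ∈ H1 P ξ A xp, Uof P u Z ≤ Uof P u (A.indicator fun ω => I (lam * ξ ω))) ∧
    (∀ Z ∈ H1 P ξ A xp,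
      Uof P u Z = Uof P u (A.indicator fun ω => I (lam * ξ ω)) →
      Z =ᵐ[P] A.indicator fun ω => I (lam * ξ ω)) := by
  have key := fun (y : ℝ) (hy : 0 < y) =>
    key_ineq u u' u'' hu_d1 hu_d2 hu_conc hu'lim I hI1 hI2 y hy
  have hvconj := fun (y : ℝ) (hy : 0 < y) =>
    vconj_eq u u' u'' hu_d1 hu_d2 hu_conc hu'lim I hI1 hI2 y hy
  set g : Ω → ℝ := fun ω => I (lam * ξ ω) with hg
  set Zs : Ω → ℝ := A.indicator g with hZsdef
  -- integrability of ξ * Zs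
  have hint : Integrable (fun ω => ξ ω * Zs ω) P := by
    by_contra hni
    rw [integral_undef hni] at hbud
    exact hxp.ne' hbud.symm
  -- nonnegativity of u ∘ max · 0
  have hu_nonneg : ∀ t : ℝ, 0 ≤ u (max t 0) := by
    intro t
    have : u 0 ≤ u (max t 0) := hu_mono.monotoneOn self_mem_Ici (le_max_right t 0) (le_max_right t 0)
    rwa [hu0] at this
  -- H1 membership
  have hmem : Zs ∈ H1 P ξ A xp := by
    refine ⟨hint, le_of_eq hbud, ae_of_all _ fun ω hω => indicator_of_notMem hω g, ?_⟩
    filter_upwards [hξpos] with ω hξω hωA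
    rw [hZsdef, indicator_of_mem hωA]
    exact (key _ (mul_pos hlam hξω)).1
  -- integrability of u(max Zs 0)
  have hZs_int : Integrable (fun ω => u (max (Zs ω) 0)) P := by
    have hFint : Integrable
        (fun ω => A.indicator (fun ω' => vconj u (lam * ξ ω')) ω + lam * (ξ ω * Zs ω)) P :=
      ((hv_int lam hlam).indicator hA).add (hint.const_mul lam)
    apply hFint.congr
    filter_upwards [hξpos] with ω hξω
    have hy : 0 < lam * ξ ω := mul_pos hlam hξω
    by_cases hωA : ω ∈ A
    · have hI0 := (key _ hy).1
      rw [hZsdef, indicator_of_mem hωA, indicator_of_mem hωA, max_eq_left hI0,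
        hvconj _ hy]
      show u (g ω) - g ω * (lam * ξ ω) + lam * (ξ ω * g ω) = u (g ω)
      ring
    · rw [hZsdef, indicator_of_notMem hωA, indicator_of_notMem hωA]
      simp [hu0]
  -- main bound per Z
  have hmain : ∀ Z ∈ H1 P ξ A xp,
      Integrable (fun ω => u (max (Z ω) 0)) P ∧
      (∀ᵐ ω ∂P, u (max (Z ω) 0) ≤ u (max (Zs ω) 0) + lam * (ξ ω * Z ω - ξ ω * Zs ω) ∧
        (u (max (Z ω) 0) = u (max (Zs ω) 0) + lam * (ξ ω * Z ω - ξ ω * Zs ω) → Z ω = Zs ω)) ∧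
      Integrable (fun ω => u (max (Zs ω) 0) + lam * (ξ ω * Z ω - ξ ω * Zs ω)) P ∧
      (∫ ω, (u (max (Zs ω) 0) + lam * (ξ ω * Z ω - ξ ω * Zs ω)) ∂P)
        = Uof P u Zs + lam * ((∫ ω, ξ ω * Z ω ∂P) - xp) := by
    intro Z hZ
    obtain ⟨hZint, hZle, hZoff, hZnn⟩ := hZ
    have hB_int : Integrable
        (fun ω => u (max (Zs ω) 0) + lam * (ξ ω * Z ω - ξ ω * Zs ω)) P :=
      hZs_int.add ((hZint.sub hint).const_mul lam)
    have hae : ∀ᵐ ω ∂P,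
        u (max (Z ω) 0) ≤ u (max (Zs ω) 0) + lam * (ξ ω * Z ω - ξ ω * Zs ω) ∧
        (u (max (Z ω) 0) = u (max (Zs ω) 0) + lam * (ξ ω * Z ω - ξ ω * Zs ω) → Z ω = Zs ω) := by
      filter_upwards [hξpos, hZoff, hZnn] with ω hξω hoff hnn
      have hy : 0 < lam * ξ ω := mul_pos hlam hξω
      obtain ⟨hI0, hkey⟩ := key _ hy
      by_cases hωA : ω ∈ A
      · have hZω : 0 ≤ Z ω := hnn hωA
        have hZsω : Zs ω = g ω := indicator_of_mem hωA g
        have h1 := (hkey (Z ω) hZω).1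
        have h2 := (hkey (Z ω) hZω).2
        have e1 : max (Z ω) 0 = Z ω := max_eq_left hZω
        have e2 : max (Zs ω) 0 = g ω := by rw [hZsω]; exact max_eq_left hI0
        constructor
        · rw [e1, e2, hZsω]; nlinarith [h1]
        · rw [e1, e2, hZsω]
          intro heq
          by_contra hne
          have := h2 hne
          nlinarith [this]
      · have hZω : Z ω = 0 := hoff hωA
        have hZsω : Zs ω = 0 := indicator_of_notMem hωA g
        rw [hZω, hZsω]
        simp
    refine ⟨?_, hae, hB_int, ?_⟩
    · -- integrability of u(max Z 0)
      have hZae : AEMeasurable Z P := by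
        have h1 : AEMeasurable (fun ω => (ξ ω * Z ω) * (ξ ω)⁻¹) P :=
          hZint.aemeasurable.mul (hξm.aemeasurable.inv)
        apply h1.congr
        filter_upwards [hξpos] with ω hξω
        field_simp
      have hcontu : Continuous (fun x : ℝ => u (max x 0)) := by
        have h1 : Continuous (fun x : ℝ => max x 0) := continuous_id.max continuous_const
        have h2 : ContinuousOn u (Ici 0) := fun x hx => (hu_d1 x hx).continuousWithinAt
        rw [← continuousOn_univ]
        exact h2.comp h1.continuousOn (fun x _ => le_max_right x 0)
      have hASM : AEStronglyMeasurable (fun ω => u (max (Z ω) 0)) P :=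
        (hcontu.measurable.comp_aemeasurable hZae).aestronglyMeasurable
      refine hB_int.mono' hASM ?_
      filter_upwards [hae] with ω hω
      rw [Real.norm_eq_abs, abs_of_nonneg (hu_nonneg (Z ω))]
      exact hω.1
    · have h3 : Integrable (fun ω => ξ ω * Z ω - ξ ω * Zs ω) P := hZint.sub hint
      have h2' : Integrable (fun ω => lam * (ξ ω * Z ω - ξ ω * Zs ω)) P := h3.const_mul lam
      rw [integral_add hZs_int h2', integral_const_mul, integral_sub hZint hint, hbud]
      rfl
  refine ⟨hmem, ?_, ?_⟩
  · intro Z hZ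
    obtain ⟨hZu_int, hae, hB_int, hIB⟩ := hmain Z hZ
    have h1 : Uof P u Z ≤ ∫ ω, (u (max (Zs ω) 0) + lam * (ξ ω * Z ω - ξ ω * Zs ω)) ∂P :=
      integral_mono_ae hZu_int hB_int (hae.mono fun ω hω => hω.1)
    rw [hIB] at h1
    have h2 : (∫ ω, ξ ω * Z ω ∂P) - xp ≤ 0 := by linarith [hZ.2.1]
    nlinarith [h1, h2]
  · intro Z hZ hEq
    obtain ⟨hZu_int, hae, hB_int, hIB⟩ := hmain Z hZ
    have hh_int : Integrable
        (fun ω => u (max (Zs ω) 0) + lam * (ξ ω * Z ω - ξ ω * Zs ω) - u (max (Z ω) 0)) P :=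
      hB_int.sub hZu_int
    have hh_nn : ∀ᵐ ω ∂P,
        0 ≤ u (max (Zs ω) 0) + lam * (ξ ω * Z ω - ξ ω * Zs ω) - u (max (Z ω) 0) :=
      hae.mono fun ω hω => by linarith [hω.1]
    have hIh : (∫ ω, (u (max (Zs ω) 0) + lam * (ξ ω * Z ω - ξ ω * Zs ω) - u (max (Z ω) 0)) ∂P)
        = lam * ((∫ ω, ξ ω * Z ω ∂P) - xp) := by
      rw [integral_sub hB_int hZu_int, hIB]
      have h4 : (∫ ω, u (max (Z ω) 0) ∂P) = Uof P u Zs := hEq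
      rw [h4]; ring
    have hIh0 : (∫ ω, (u (max (Zs ω) 0) + lam * (ξ ω * Z ω - ξ ω * Zs ω) - u (max (Z ω) 0)) ∂P)
        = 0 := by
      have hle : (∫ ω, (u (max (Zs ω) 0) + lam * (ξ ω * Z ω - ξ ω * Zs ω) - u (max (Z ω) 0)) ∂P)
          ≤ 0 := by
        rw [hIh]
        have h2 : (∫ ω, ξ ω * Z ω ∂P) - xp ≤ 0 := by linarith [hZ.2.1]
        nlinarith
      have hge := integral_nonneg_of_ae hh_nn
      linarith
    have hzero : (fun ω => u (max (Zs ω) 0) + lam * (ξ ω * Z ω - ξ ω * Zs ω) - u (max (Z ω) 0))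
        =ᵐ[P] 0 := (integral_eq_zero_iff_of_nonneg_ae hh_nn hh_int).mp hIh0
    filter_upwards [hae, hzero] with ω hω hz
    have heq : u (max (Z ω) 0) = u (max (Zs ω) 0) + lam * (ξ ω * Z ω - ξ ω * Zs ω) := by
      have h5 : u (max (Zs ω) 0) + lam * (ξ ω * Z ω - ξ ω * Zs ω) - u (max (Z ω) 0) = 0 := hz
      linarith
    exact hω.2 heq
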